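/- arXiv:1411.5767 — 2 statements merged into one kernel-verified Lean document; each statement's English description precedes it below -/
import Mathlib

section
/- For fixed D with 0 ≤ D < 1/2, the region Φ_r(D) = {(a1,a2) ∈ [0,D]² : a1 + a2 - 2 a1 a2 ≤ D} is convex. -/
/-- For `0 ≤ D < 1/2`, the region
`Φ_r(D) = {(a1, a2) ∈ [0,D]² : a1 + a2 - 2 a1 a2 ≤ D}` is convex. -/
theorem stmt3 (D : ℝ) (hD0 : 0 ≤ D) (hD : D < 1 / 2) :
    Convex ℝ {a : ℝ × ℝ | a.1 ∈ Set.Icc 0 D ∧ a.2 ∈ Set.Icc 0 D ∧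
      a.1 + a.2 - 2 * a.1 * a.2 ≤ D} := by
  rintro ⟨x1, x2⟩ ⟨⟨hx10, hx1D⟩, ⟨hx20, hx2D⟩, hxf⟩
    ⟨y1, y2⟩ ⟨⟨hy10, hy1D⟩, ⟨hy20, hy2D⟩, hyf⟩ a b ha hb hab
  obtain rfl : b = 1 - a := by linarith
  simp only [Set.mem_setOf_eq, Set.mem_Icc, Prod.fst, Prod.snd, Prod.smul_mk, Prod.mk_add_mk,
    smul_eq_mul] at *
  have hax : a * x1 ≤ a * D := mul_le_mul_of_nonneg_left hx1D ha
  have hbx : (1 - a) * y1 ≤ (1 - a) * D := mul_le_mul_of_nonneg_left hy1D hb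
  have hay : a * x2 ≤ a * D := mul_le_mul_of_nonneg_left hx2D ha
  have hby : (1 - a) * y2 ≤ (1 - a) * D := mul_le_mul_of_nonneg_left hy2D hb
  have hz1 : a * x1 + (1 - a) * y1 < 1 / 2 := by nlinarith
  refine ⟨⟨by nlinarith, by nlinarith⟩, ⟨by nlinarith, by nlinarith⟩, ?_⟩
  rcases le_or_gt ((x1 - y1) * (x2 - y2)) 0 with hc | hc
  · nlinarith [mul_nonneg ha (sub_nonneg.2 hxf), mul_nonneg hb (sub_nonneg.2 hyf),
      mul_nonneg (mul_nonneg ha hb) (neg_nonneg.2 hc)]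
  · rcases le_or_gt x1 y1 with h1 | h1
    · have h2 : x2 ≤ y2 := by nlinarith
      linarith [hyf, mul_nonneg (mul_nonneg ha (sub_nonneg.2 h1))
          (by linarith : (0:ℝ) ≤ 1 - 2 * y2),
        mul_nonneg (mul_nonneg ha (sub_nonneg.2 h2))
          (by linarith : (0:ℝ) ≤ 1 - 2 * (a * x1 + (1 - a) * y1))]
    · have h2 : y2 ≤ x2 := by nlinarith
      have h1' : y1 ≤ x1 := h1.le
      linarith [hxf, mul_nonneg (mul_nonneg hb (sub_nonneg.2 h1'))
          (by linarith : (0:ℝ) ≤ 1 - 2 * x2),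
        mul_nonneg (mul_nonneg hb (sub_nonneg.2 h2))
          (by linarith : (0:ℝ) ≤ 1 - 2 * (a * x1 + (1 - a) * y1))]
end

section
/- In the setting of the previous merging construction, if additionally E[ρ(X,Y) | Y = ȳ] ≤ E[ρ(X,Y) | Y = ỹ] for a distortion function ρ: 𝒳×𝒴 → [0,∞), then E[ρ(X̃, Ỹ)] ≤ E[ρ(X, Y)]. -/
open Finset

/-- `p` is a probability mass function on a finite type. -/
def isPMF {Ω : Type*} [Fintype Ω] (p : Ω → ℝ) : Prop :=
  (∀ ω, 0 ≤ p ω) ∧ ∑ ω, p ω = 1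

/-- Probability that the random variable `X` takes the value `x`. -/
noncomputable def prob {Ω α : Type*} [Fintype Ω] [DecidableEq α]
    (p : Ω → ℝ) (X : Ω → α) (x : α) : ℝ :=
  ∑ ω, if X ω = x then p ω else 0

/-- Shannon entropy of the random variable `X`. -/
noncomputable def ent {Ω α : Type*} [Fintype Ω] [Fintype α] [DecidableEq α]
    (p : Ω → ℝ) (X : Ω → α) : ℝ :=
  -∑ x, prob p X x * Real.log (prob p X x)

/-- Conditional Shannon entropy `H(X|Y)`. -/
noncomputable def condEnt {Ω α β : Type*} [Fintype Ω] [Fintype α] [Fintype β]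
    [DecidableEq α] [DecidableEq β] (p : Ω → ℝ) (X : Ω → α) (Y : Ω → β) : ℝ :=
  ent p (fun ω => (X ω, Y ω)) - ent p Y

/-- Mutual information `I(X;Y)`. -/
noncomputable def mutInfo {Ω α β : Type*} [Fintype Ω] [Fintype α] [Fintype β]
    [DecidableEq α] [DecidableEq β] (p : Ω → ℝ) (X : Ω → α) (Y : Ω → β) : ℝ :=
  ent p X + ent p Y - ent p (fun ω => (X ω, Y ω))

/-- The Markov chain `X − U − Y`: `X` and `Y` are conditionally independent given `U`. -/
def markov {Ω α β γ : Type*} [Fintype Ω] [DecidableEq α] [DecidableEq β] [DecidableEq γ]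
    (p : Ω → ℝ) (X : Ω → α) (U : Ω → β) (Y : Ω → γ) : Prop :=
  ∀ x u y, prob p (fun ω => (X ω, U ω, Y ω)) (x, u, y) * prob p U u =
    prob p (fun ω => (X ω, U ω)) (x, u) * prob p (fun ω => (U ω, Y ω)) (u, y)

/-- In the merging construction (mass of `Ỹ` moved from `y2` to `y1`, identical
posteriors), if moreover `E[ρ(X,Y)|Y = y1] ≤ E[ρ(X,Y)|Y = y2]` for a distortion
function `ρ ≥ 0`, then `E[ρ(X̃, Ỹ)] ≤ E[ρ(X, Y)]`. -/
theorem stmt13 {𝒳 𝒴 : Type*} [Fintype 𝒳] [Fintype 𝒴] [DecidableEq 𝒳] [DecidableEq 𝒴]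
    (p : 𝒳 × 𝒴 → ℝ) (hp : isPMF p) (y1 y2 : 𝒴) (hne : y1 ≠ y2)
    (hy1 : 0 < prob p Prod.snd y1) (hy2 : 0 < prob p Prod.snd y2)
    (hcond : ∀ x : 𝒳,
      prob p id (x, y1) / prob p Prod.snd y1 = prob p id (x, y2) / prob p Prod.snd y2)
    (ptil : 𝒳 × 𝒴 → ℝ)
    (hptil : ∀ x y, ptil (x, y) =
      if y = y2 then 0 else if y = y1 then p (x, y1) + p (x, y2) else p (x, y))
    (ρ : 𝒳 → 𝒴 → ℝ) (hρ : ∀ x y, 0 ≤ ρ x y)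
    (hmean : (∑ x, p (x, y1) * ρ x y1) / prob p Prod.snd y1 ≤
             (∑ x, p (x, y2) * ρ x y2) / prob p Prod.snd y2) :
    ∑ z : 𝒳 × 𝒴, ptil z * ρ z.1 z.2 ≤ ∑ z : 𝒳 × 𝒴, p z * ρ z.1 z.2 := by
  set P1 := prob p Prod.snd y1 with hP1
  set P2 := prob p Prod.snd y2 with hP2
  have hid : ∀ z : 𝒳 × 𝒴, prob p id z = p z := by
    intro z
    simp [prob, Finset.sum_ite_eq']
  have hprop : ∀ x, p (x, y2) = p (x, y1) * (P2 / P1) := by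
    intro x
    have h := hcond x
    rw [hid, hid, div_eq_div_iff hy1.ne' hy2.ne'] at h
    field_simp
    linarith [h]
  have key : ∑ x, p (x, y2) * ρ x y1 ≤ ∑ x, p (x, y2) * ρ x y2 := by
    have h1 : ∑ x, p (x, y2) * ρ x y1 = (∑ x, p (x, y1) * ρ x y1) / P1 * P2 := by
      rw [Finset.sum_div, Finset.sum_mul]
      apply Finset.sum_congr rfl
      intro x _
      rw [hprop x]
      field_simp
    have h2 : ∑ x, p (x, y2) * ρ x y2 = (∑ x, p (x, y2) * ρ x y2) / P2 * P2 := by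
      field_simp
    rw [h1, h2]
    exact mul_le_mul_of_nonneg_right hmean hy2.le
  have hsplit : ∑ z : 𝒳 × 𝒴, p z * ρ z.1 z.2 - ∑ z : 𝒳 × 𝒴, ptil z * ρ z.1 z.2
      = ∑ x, p (x, y2) * ρ x y2 - ∑ x, p (x, y2) * ρ x y1 := by
    rw [← Finset.sum_sub_distrib]
    rw [Fintype.sum_prod_type]
    rw [← Finset.sum_sub_distrib]
    apply Finset.sum_congr rfl
    intro x _
    have hinner : ∀ y : 𝒴, p (x, y) * ρ x y - ptil (x, y) * ρ x y
        = (if y = y2 then p (x, y2) * ρ x y2 else 0)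
          + (if y = y1 then -(p (x, y2) * ρ x y1) else 0) := by
      intro y
      rcases eq_or_ne y y2 with rfl | h2
      · rw [hptil]
        simp [hne.symm]
      · rcases eq_or_ne y y1 with rfl | h1
        · rw [hptil]
          simp [hne, h2]
          ring
        · rw [hptil]
          simp [h1, h2]
    calc ∑ y, (p (x, y) * ρ x y - ptil (x, y) * ρ x y)
        = ∑ y, ((if y = y2 then p (x, y2) * ρ x y2 else 0)
          + (if y = y1 then -(p (x, y2) * ρ x y1) else 0)) := by
          exact Finset.sum_congr rfl fun y _ => hinner y
      _ = p (x, y2) * ρ x y2 - p (x, y2) * ρ x y1 := by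
          rw [Finset.sum_add_distrib, Finset.sum_ite_eq', Finset.sum_ite_eq']
          simp
          ring
  linarith [hsplit, key]
end
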